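/- For every integer n ≥ 2, the sum θ(n) = Σ_{k=n}^{∞} 1/(k²(k+1)²) satisfies θ(n) ≤ 4/(9n³). -/
import Mathlib

lemma term_le (x : ℝ) (hx : 1 ≤ x) :
    1 / (x ^ 2 * (x + 1) ^ 2) ≤ 1 / (3 * x ^ 3) - 1 / (3 * (x + 1) ^ 3) := by
  have hx0 : 0 < x := by linarith
  have hx1 : 0 < x + 1 := by linarith
  rw [div_sub_div _ _ (by positivity) (by positivity), div_le_div_iff₀ (by positivity) (by positivity)]
  ring_nf
  nlinarith [pow_pos hx0 3, pow_pos hx1 3, sq_nonneg x, mul_pos hx0 hx1]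

theorem theta_bound (n : ℕ) (hn : 2 ≤ n) :
    ∑' k : ℕ, (1 : ℝ) / (((n : ℝ) + k) ^ 2 * ((n : ℝ) + k + 1) ^ 2)
      ≤ 4 / (9 * (n : ℝ) ^ 3) := by
  have hn1 : (1 : ℝ) ≤ n := by exact_mod_cast Nat.one_le_of_lt hn
  set h : ℕ → ℝ := fun k => 1 / (3 * ((n : ℝ) + k) ^ 3) with hh
  have hbound : ∀ k : ℕ, (1 : ℝ) / (((n : ℝ) + k) ^ 2 * ((n : ℝ) + k + 1) ^ 2)
      ≤ h k - h (k + 1) := by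
    intro k
    have hx : (1 : ℝ) ≤ (n : ℝ) + k := by
      have : (0 : ℝ) ≤ k := Nat.cast_nonneg k
      linarith
    have := term_le ((n : ℝ) + k) hx
    simpa [hh, Nat.cast_add, Nat.cast_one, add_assoc] using this
  have hnonneg : ∀ k : ℕ, 0 ≤ h k - h (k + 1) := by
    intro k
    have hx : (1 : ℝ) ≤ (n : ℝ) + k := by
      have : (0 : ℝ) ≤ k := Nat.cast_nonneg k
      linarith
    have h1 := hbound k
    have h2 : 0 ≤ (1 : ℝ) / (((n : ℝ) + k) ^ 2 * ((n : ℝ) + k + 1) ^ 2) := by positivity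
    linarith
  -- telescoping sum
  have htend : Filter.Tendsto h Filter.atTop (nhds 0) := by
    rw [hh]
    have h1 : Filter.Tendsto (fun k : ℕ => ((n : ℝ) + k)) Filter.atTop Filter.atTop :=
      Filter.tendsto_atTop_add_const_left _ _ tendsto_natCast_atTop_atTop
    have h2 : Filter.Tendsto (fun k : ℕ => ((n : ℝ) + k) ^ 3) Filter.atTop Filter.atTop :=
      (Filter.tendsto_pow_atTop (n := 3) (by norm_num)).comp h1
    have h3 : Filter.Tendsto (fun k : ℕ => (3 * ((n : ℝ) + k) ^ 3)) Filter.atTop Filter.atTop :=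
      h2.const_mul_atTop (by norm_num)
    have := h3.inv_tendsto_atTop
    refine this.congr fun k => ?_
    simp [one_div, mul_inv, mul_comm]
  have hsum : HasSum (fun k => h k - h (k + 1)) (h 0) := by
    rw [hasSum_iff_tendsto_nat_of_nonneg hnonneg]
    have heq : ∀ m : ℕ, ∑ i ∈ Finset.range m, (h i - h (i + 1)) = h 0 - h m := by
      intro m
      exact Finset.sum_range_sub' h m
    simp only [heq]
    have := Filter.Tendsto.const_sub (h 0) htend
    simpa using this
  have hsummable : Summable (fun k : ℕ => (1 : ℝ) / (((n : ℝ) + k) ^ 2 * ((n : ℝ) + k + 1) ^ 2)) := by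
    apply Summable.of_nonneg_of_le (fun k => by positivity) hbound hsum.summable
  have hle : ∑' k : ℕ, (1 : ℝ) / (((n : ℝ) + k) ^ 2 * ((n : ℝ) + k + 1) ^ 2) ≤ h 0 := by
    rw [← hsum.tsum_eq]
    exact Summable.tsum_le_tsum hbound hsummable hsum.summable
  refine hle.trans ?_
  have hh0 : h 0 = 1 / (3 * (n : ℝ) ^ 3) := by simp [hh]
  rw [hh0, div_le_div_iff₀ (by positivity) (by positivity)]
  nlinarith [pow_pos (show (0:ℝ) < n by linarith) 3]
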